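/- arXiv:1206.3826 — 2 statements merged into one kernel-verified Lean document; each statement's English description precedes it below -/
import Mathlib

section
/- For integers r ≥ 1, k_1,…,k_r ≥ 0, real x, and the identities ∫₀ˣ ∏_j B_{k_j}(z) dz = (1/(k_r+1))(∏_{j<r} B_{k_j}(x) · B_{k_r+1}(x) − ∏_{j<r} B_{k_j} · B_{k_r+1}) − (1/(k_r+1)) ∑_{m=1}^{r-1} k_m ∫₀ˣ B_{k_1}(z)⋯B_{k_m−1}(z)⋯B_{k_{r-1}}(z) B_{k_r+1}(z) dz (where in the m-th integral the index k_m is replaced by k_m − 1), this integration-by-parts recurrence holds. -/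
/-- The `k`-th Bernoulli polynomial evaluated at a real `x`. -/
noncomputable def B (k : ℕ) (x : ℝ) : ℝ :=
  Polynomial.aeval x (Polynomial.bernoulli k)

lemma B_eq (k : ℕ) : B k = fun x => ((Polynomial.bernoulli k).map (algebraMap ℚ ℝ)).eval x := by
  funext x
  simp [B, Polynomial.aeval_def, Polynomial.eval_map]

lemma continuous_B (k : ℕ) : Continuous (B k) :=
  (Polynomial.bernoulli k).continuous_aeval

lemma hasDerivAt_B (k : ℕ) (x : ℝ) : HasDerivAt (B k) ((k : ℝ) * B (k - 1) x) x := by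
  rw [B_eq, B_eq]
  have h := ((Polynomial.bernoulli k).map (algebraMap ℚ ℝ)).hasDerivAt x
  refine h.congr_deriv ?_
  rw [Polynomial.derivative_map, Polynomial.derivative_bernoulli, Polynomial.map_mul,
    Polynomial.map_natCast, Polynomial.eval_mul, Polynomial.eval_natCast]

/-- Integration-by-parts recurrence for the integral of a product of `r + 1 ≥ 1`
Bernoulli polynomials. -/
theorem integral_prod_bernoulli_poly_parts (r : ℕ) (k : Fin (r + 1) → ℕ) (x : ℝ) :
    ∫ z in (0:ℝ)..x, ∏ j, B (k j) z =
      (1 / ((k (Fin.last r) : ℝ) + 1)) *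
        ((∏ j : Fin r, B (k j.castSucc) x) * B (k (Fin.last r) + 1) x -
          (∏ j : Fin r, B (k j.castSucc) 0) * B (k (Fin.last r) + 1) 0) -
      (1 / ((k (Fin.last r) : ℝ) + 1)) *
        ∑ m : Fin r, (k m.castSucc : ℝ) *
          ∫ z in (0:ℝ)..x,
            (∏ j : Fin r, B (if j = m then k j.castSucc - 1 else k j.castSucc) z) *
              B (k (Fin.last r) + 1) z := by
  set c : ℝ := (k (Fin.last r) : ℝ) + 1 with hc_def
  have hc : c ≠ 0 := by positivity
  set Q : Fin r → ℝ → ℝ := fun m z =>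
    (∏ j : Fin r, B (if j = m then k j.castSucc - 1 else k j.castSucc) z) *
      B (k (Fin.last r) + 1) z with hQ
  set F : ℝ → ℝ := fun z => (∏ j : Fin r, B (k j.castSucc) z) * B (k (Fin.last r) + 1) z with hF
  -- derivative of F
  have hderiv : ∀ z : ℝ, HasDerivAt F
      (c * ∏ j, B (k j) z + ∑ m : Fin r, (k m.castSucc : ℝ) * Q m z) z := by
    intro z
    have hP : HasDerivAt (fun z => ∏ j : Fin r, B (k j.castSucc) z)
        (∑ i : Fin r, (∏ j ∈ Finset.univ.erase i, B (k j.castSucc) z) •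
          ((k i.castSucc : ℝ) * B (k i.castSucc - 1) z)) z :=
      HasDerivAt.fun_finsetProd (fun i _ => hasDerivAt_B _ z)
    have hB : HasDerivAt (B (k (Fin.last r) + 1))
        (((k (Fin.last r) + 1 : ℕ) : ℝ) * B (k (Fin.last r) + 1 - 1) z) z := hasDerivAt_B _ z
    have h := hP.mul hB
    refine h.congr_deriv ?_
    have hprodall : (∏ j, B (k j) z) =
        (∏ j : Fin r, B (k j.castSucc) z) * B (k (Fin.last r)) z := Fin.prod_univ_castSucc _
    have hQm : ∀ m : Fin r, Q m z =
        (B (k m.castSucc - 1) z * ∏ j ∈ Finset.univ.erase m, B (k j.castSucc) z) *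
          B (k (Fin.last r) + 1) z := by
      intro m
      simp only [hQ]
      congr 1
      rw [← Finset.mul_prod_erase Finset.univ _ (Finset.mem_univ m)]
      simp only [if_pos rfl]
      congr 1
      exact Finset.prod_congr rfl fun j hj => by
        rw [if_neg (Finset.ne_of_mem_erase hj)]
    rw [hprodall]
    have hterm : ∀ m : Fin r, (k m.castSucc : ℝ) * Q m z =
        ((∏ j ∈ Finset.univ.erase m, B (k j.castSucc) z) •
          ((k m.castSucc : ℝ) * B (k m.castSucc - 1) z)) * B (k (Fin.last r) + 1) z := by
      intro m
      rw [hQm m, smul_eq_mul]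
      ring
    rw [Finset.sum_congr rfl fun m _ => hterm m, ← Finset.sum_mul]
    simp only [Nat.add_sub_cancel]
    push_cast
    ring
  -- continuity facts
  have hcontP : Continuous fun z => ∏ j, B (k j) z :=
    continuous_finset_prod _ fun j _ => continuous_B _
  have hcontQ : ∀ m : Fin r, Continuous (Q m) := fun m =>
    (continuous_finset_prod _ fun j _ => continuous_B _).mul (continuous_B _)
  have hcont : Continuous fun z => c * ∏ j, B (k j) z +
      ∑ m : Fin r, (k m.castSucc : ℝ) * Q m z := by
    apply ((continuous_const.mul hcontP).add _)
    exact continuous_finset_sum _ fun m _ => continuous_const.mul (hcontQ m)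
  have key : (∫ z in (0:ℝ)..x, (c * ∏ j, B (k j) z +
      ∑ m : Fin r, (k m.castSucc : ℝ) * Q m z)) = F x - F 0 :=
    intervalIntegral.integral_eq_sub_of_hasDerivAt (fun z _ => hderiv z)
      (hcont.intervalIntegrable 0 x)
  rw [intervalIntegral.integral_add ((continuous_const.fun_mul hcontP).intervalIntegrable 0 x)
      ((continuous_finset_sum _ fun m _ =>
        continuous_const.fun_mul (hcontQ m)).intervalIntegrable 0 x),
    intervalIntegral.integral_const_mul,
    intervalIntegral.integral_finset_sum
      (fun m _ => (continuous_const.fun_mul (hcontQ m)).intervalIntegrable 0 x)] at key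
  simp only [intervalIntegral.integral_const_mul, hQ] at key
  have hFx : F x - F 0 = (∏ j : Fin r, B (k j.castSucc) x) * B (k (Fin.last r) + 1) x -
      (∏ j : Fin r, B (k j.castSucc) 0) * B (k (Fin.last r) + 1) 0 := rfl
  rw [hFx] at key
  field_simp at key ⊢
  linarith [key]
end

section
/- For integers k, l, m ≥ 1 with k + l + m even, ∫₀¹ B_k(z)B_l(z)B_m(z) dz = (-1)^{m+1} k! l! m! ∑_{a=0}^{k+l} [C(a, l-1) + C(a, k-1)] · (B_{m+a+1}/(m+a+1)!) · (B_{k+l−a−1}/(k+l−a−1)!), where terms with negative index k+l−a−1 are zero. -/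
/-- `B̃_n = B_n / n!`, set to `0` for negative `n`. -/
noncomputable def Bt (n : ℤ) : ℝ :=
  if 0 ≤ n then B n.toNat 0 / n.toNat.factorial else 0

@[continuity, fun_prop]
lemma B_cont (n : ℕ) : Continuous (B n) := Polynomial.continuous_aeval _

lemma B_hasDerivAt (n : ℕ) (x : ℝ) : HasDerivAt (B n) ((n : ℝ) * B (n-1) x) x := by
  have h := Polynomial.hasDerivAt_aeval (q := Polynomial.bernoulli n) (𝕜 := ℝ) x
  simp only [Polynomial.derivative_bernoulli, map_mul, map_natCast] at h
  exact h

lemma B_zero_eval (n : ℕ) : B n 0 = ((bernoulli n : ℚ) : ℝ) := by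
  rw [B, Polynomial.aeval_def, Polynomial.eval₂_eq_eval_map, Polynomial.eval_zero_map,
    Polynomial.bernoulli_eval_zero]
  rfl

lemma B_one_eval (n : ℕ) : B n 1 = (-1 : ℝ)^n * B n 0 := by
  rw [B_zero_eval, B, Polynomial.aeval_def, Polynomial.eval₂_eq_eval_map,
    Polynomial.eval_one_map, Polynomial.bernoulli_eval_one, bernoulli'_eq_bernoulli]
  rw [show ((algebraMap ℚ ℝ) ((-1) ^ n * bernoulli n)) = (((-1) ^ n * bernoulli n : ℚ) : ℝ) from rfl]
  push_cast
  ring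

lemma B_odd_zero (n : ℕ) (h : Odd n) (h1 : n ≠ 1) : B n 0 = 0 := by
  have h2 : 1 < n := by obtain ⟨t, ht⟩ := h; omega
  rw [B_zero_eval, bernoulli_eq_bernoulli'_of_ne_one h1, bernoulli'_eq_zero_of_odd h h2,
    Rat.cast_zero]

lemma B_zero_zero : B 0 0 = 1 := by rw [B_zero_eval]; norm_num
lemma B_one_zero : B 1 0 = -(1/2) := by rw [B_zero_eval, bernoulli_one]; norm_num

lemma J_rec (k l m : ℕ) :
    ((m:ℝ)+1) * (∫ z in (0:ℝ)..1, B k z * B l z * B m z)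
      = ((-1:ℝ)^(k+l+m+1) - 1) * (B k 0 * B l 0 * B (m+1) 0)
        - (k:ℝ) * (∫ z in (0:ℝ)..1, B (k-1) z * B l z * B (m+1) z)
        - (l:ℝ) * (∫ z in (0:ℝ)..1, B k z * B (l-1) z * B (m+1) z) := by
  have hu : ∀ x ∈ Set.uIcc (0:ℝ) 1, HasDerivAt (fun z => B k z * B l z)
      ((k:ℝ) * B (k-1) x * B l x + B k x * ((l:ℝ) * B (l-1) x)) x :=
    fun x _ => (B_hasDerivAt k x).mul (B_hasDerivAt l x)
  have hv : ∀ x ∈ Set.uIcc (0:ℝ) 1, HasDerivAt (B (m+1)) (((m:ℝ)+1) * B m x) x := by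
    intro x _
    have := B_hasDerivAt (m+1) x
    simpa using this
  have hcont : ∀ n : ℕ, IntervalIntegrable (B n) MeasureTheory.volume (0:ℝ) 1 :=
    fun n => (B_cont n).intervalIntegrable 0 1
  have hu' : IntervalIntegrable (fun x => (k:ℝ) * B (k-1) x * B l x + B k x * ((l:ℝ) * B (l-1) x))
      MeasureTheory.volume (0:ℝ) 1 := by
    apply Continuous.intervalIntegrable
    fun_prop
  have hv' : IntervalIntegrable (fun x => ((m:ℝ)+1) * B m x) MeasureTheory.volume (0:ℝ) 1 := by
    apply Continuous.intervalIntegrable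
    fun_prop
  have key := intervalIntegral.integral_mul_deriv_eq_deriv_mul hu hv hu' hv'
  have L : (∫ x in (0:ℝ)..1, (B k x * B l x) * (((m:ℝ)+1) * B m x))
      = ((m:ℝ)+1) * ∫ z in (0:ℝ)..1, B k z * B l z * B m z := by
    rw [← intervalIntegral.integral_const_mul]
    apply intervalIntegral.integral_congr
    intro x _
    ring
  have R : (∫ x in (0:ℝ)..1, ((k:ℝ) * B (k-1) x * B l x + B k x * ((l:ℝ) * B (l-1) x)) * B (m+1) x)
      = (k:ℝ) * (∫ z in (0:ℝ)..1, B (k-1) z * B l z * B (m+1) z)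
        + (l:ℝ) * (∫ z in (0:ℝ)..1, B k z * B (l-1) z * B (m+1) z) := by
    rw [← intervalIntegral.integral_const_mul, ← intervalIntegral.integral_const_mul,
      ← intervalIntegral.integral_add]
    · apply intervalIntegral.integral_congr
      intro x _
      ring
    · apply Continuous.intervalIntegrable; fun_prop
    · apply Continuous.intervalIntegrable; fun_prop
  have bd : B k 1 * B l 1 * B (m+1) 1 = (-1:ℝ)^(k+l+m+1) * (B k 0 * B l 0 * B (m+1) 0) := by
    rw [B_one_eval, B_one_eval, B_one_eval,
      show k+l+m+1 = k+(l+(m+1)) by omega, pow_add, pow_add]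
    ring
  rw [L, R] at key
  rw [key, bd]
  ring

noncomputable def ch (a : ℕ) (j : ℤ) : ℝ :=
  if 0 ≤ j then (a.choose j.toNat : ℝ) else 0

noncomputable def S (k l m : ℕ) : ℝ :=
  ∑ a ∈ Finset.range (k + l + 1),
    (ch a ((l:ℤ) - 1) + ch a ((k:ℤ) - 1)) * Bt ((m : ℤ) + a + 1) * Bt ((k : ℤ) + l - a - 1)

noncomputable def F (k l m : ℕ) : ℝ :=
  (-1 : ℝ) ^ (m + 1) * k.factorial * l.factorial * m.factorial * S k l m

lemma Bt_neg (n : ℤ) (h : n < 0) : Bt n = 0 := by simp [Bt, not_le.mpr h]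

lemma Bt_nat (n : ℕ) : Bt (n : ℤ) = B n 0 / n.factorial := by simp [Bt]

lemma ch_neg (a : ℕ) (j : ℤ) (h : j < 0) : ch a j = 0 := by simp [ch, not_le.mpr h]

lemma ch_nat (a t : ℕ) : ch a (t : ℤ) = (a.choose t : ℝ) := by simp [ch]

lemma ch_zero (j : ℤ) : ch 0 j = if j = 0 then 1 else 0 := by
  rcases lt_trichotomy j 0 with h | h | h
  · rw [ch_neg _ _ h, if_neg (by omega)]
  · subst h; simp [ch]
  · rw [if_neg (by omega)]
    obtain ⟨t, rfl⟩ : ∃ t : ℕ, j = (t:ℤ) + 1 := ⟨(j-1).toNat, by omega⟩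
    rw [show ((t:ℤ) + 1) = ((t+1 : ℕ) : ℤ) by push_cast; ring, ch_nat]
    simp [Nat.choose_eq_zero_of_lt]

lemma ch_pascal (b : ℕ) (j : ℤ) : ch (b+1) j = ch b j + ch b (j-1) := by
  rcases lt_trichotomy j 0 with h | h | h
  · rw [ch_neg _ _ h, ch_neg _ _ h, ch_neg _ _ (by omega)]; ring
  · subst h
    rw [show (0:ℤ) = ((0:ℕ):ℤ) from rfl, ch_nat, ch_nat, ch_neg _ _ (by norm_num)]
    simp
  · obtain ⟨t, rfl⟩ : ∃ t : ℕ, j = (t:ℤ) + 1 := ⟨(j-1).toNat, by omega⟩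
    rw [show ((t:ℤ) + 1) = ((t+1 : ℕ) : ℤ) by push_cast; ring, ch_nat, ch_nat,
      show ((t+1 : ℕ) : ℤ) - 1 = (t : ℤ) by push_cast; ring, ch_nat,
      Nat.choose_succ_succ]
    push_cast
    ring

lemma S_split (k l m : ℕ) :
    S k l m = ((if l = 1 then (1:ℝ) else 0) + (if k = 1 then (1:ℝ) else 0))
        * Bt ((m:ℤ) + 1) * Bt ((k:ℤ) + l - 1)
      + ∑ b ∈ Finset.range (k + l),
          ((ch b ((l:ℤ) - 1) + ch b ((k:ℤ) - 2)) * Bt ((m:ℤ) + b + 2) * Bt ((k:ℤ) + l - b - 2)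
           + (ch b ((k:ℤ) - 1) + ch b ((l:ℤ) - 2)) * Bt ((m:ℤ) + b + 2) * Bt ((k:ℤ) + l - b - 2)) := by
  rw [S, Finset.sum_range_succ']
  rw [add_comm]
  congr 1
  · rw [show ((0:ℕ):ℤ) = 0 from rfl] -- the a = 0 term
    rw [ch_zero, ch_zero,
      if_congr (show ((l:ℤ) - 1 = 0) ↔ (l = 1) by omega) rfl rfl,
      if_congr (show ((k:ℤ) - 1 = 0) ↔ (k = 1) by omega) rfl rfl,
      show (m:ℤ) + 0 + 1 = (m:ℤ) + 1 by ring,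
      show (k:ℤ) + (l:ℤ) - 0 - 1 = (k:ℤ) + l - 1 by ring]
  · apply Finset.sum_congr rfl
    intro b _
    rw [ch_pascal, ch_pascal,
      show ((l:ℤ) - 1) - 1 = (l:ℤ) - 2 by ring,
      show ((k:ℤ) - 1) - 1 = (k:ℤ) - 2 by ring,
      show (m:ℤ) + ((b:ℕ)+1:ℕ) + 1 = (m:ℤ) + b + 2 by push_cast; ring,
      show (k:ℤ) + l - ((b:ℕ)+1:ℕ) - 1 = (k:ℤ) + l - b - 2 by push_cast; ring]
    ring

lemma F_symm (k l m : ℕ) : F k l m = F l k m := by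
  have hS : S k l m = S l k m := by
    rw [S, S, show l + k = k + l from Nat.add_comm l k]
    refine Finset.sum_congr rfl fun a _ => ?_
    rw [show (l:ℤ) + k - a - 1 = (k:ℤ) + l - a - 1 by ring]
    ring
  rw [F, F, hS]
  ring

lemma kF (k l m : ℕ) :
    (k:ℝ) * F (k-1) l (m+1)
      = -((-1:ℝ)^(m+1) * k.factorial * l.factorial * (m+1).factorial)
        * ∑ b ∈ Finset.range (k+l),
            (ch b ((l:ℤ)-1) + ch b ((k:ℤ)-2)) * Bt ((m:ℤ)+b+2) * Bt ((k:ℤ)+l-b-2) := by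
  rcases Nat.eq_zero_or_pos k with rfl | hk
  · have hsum : ∑ b ∈ Finset.range (0+l),
        (ch b ((l:ℤ)-1) + ch b (((0:ℕ):ℤ)-2)) * Bt ((m:ℤ)+b+2) * Bt (((0:ℕ):ℤ)+l-b-2) = 0 := by
      apply Finset.sum_eq_zero
      intro b hb
      have hbl : b < l := by simpa using hb
      rw [ch_neg b (((0:ℕ):ℤ)-2) (by norm_num)]
      rcases Nat.lt_or_ge (b+1) l with hlt | hge
      · have h2 : (l:ℤ) - 1 = ((l - 1 : ℕ) : ℤ) := by omega
        rw [h2, ch_nat, Nat.choose_eq_zero_of_lt (by omega)]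
        norm_num
      · have hb' : b = l - 1 := by omega
        rw [Bt_neg (((0:ℕ):ℤ)+l-b-2) (by omega)]
        ring
    rw [hsum]
    norm_num
  · obtain ⟨k', rfl⟩ : ∃ k', k = k' + 1 := ⟨k-1, by omega⟩
    have hsum : ∑ b ∈ Finset.range (k'+1+l),
        (ch b ((l:ℤ)-1) + ch b (((k'+1:ℕ):ℤ)-2)) * Bt ((m:ℤ)+b+2) * Bt (((k'+1:ℕ):ℤ)+l-b-2)
        = S k' l (m+1) := by
      rw [S, show k'+1+l = k'+l+1 from by omega]
      refine Finset.sum_congr rfl fun b _ => ?_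
      rw [show ((k'+1:ℕ):ℤ)-2 = (k':ℤ)-1 by push_cast; ring,
        show ((m+1:ℕ):ℤ)+b+1 = (m:ℤ)+b+2 by push_cast; ring,
        show ((k'+1:ℕ):ℤ)+l-b-2 = (k':ℤ)+l-b-1 by push_cast; ring]
    rw [hsum, show k'+1-1 = k' from rfl, F]
    push_cast [Nat.factorial_succ, pow_succ]
    ring

lemma lF (k l m : ℕ) :
    (l:ℝ) * F k (l-1) (m+1)
      = -((-1:ℝ)^(m+1) * k.factorial * l.factorial * (m+1).factorial)
        * ∑ b ∈ Finset.range (k+l),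
            (ch b ((k:ℤ)-1) + ch b ((l:ℤ)-2)) * Bt ((m:ℤ)+b+2) * Bt ((k:ℤ)+l-b-2) := by
  have h := kF l k m
  rw [F_symm (l-1) k (m+1)] at h
  have hs : ∑ b ∈ Finset.range (l+k),
      (ch b ((k:ℤ)-1) + ch b ((l:ℤ)-2)) * Bt ((m:ℤ)+b+2) * Bt ((l:ℤ)+k-b-2)
      = ∑ b ∈ Finset.range (k+l),
      (ch b ((k:ℤ)-1) + ch b ((l:ℤ)-2)) * Bt ((m:ℤ)+b+2) * Bt ((k:ℤ)+l-b-2) := by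
    rw [Nat.add_comm l k]
    exact Finset.sum_congr rfl fun b _ => by
      rw [show (l:ℤ)+(k:ℤ)-(b:ℤ)-2 = (k:ℤ)+l-b-2 by ring]
  rw [h, hs]
  ring

lemma A0_eq (k l m : ℕ) (hm : 1 ≤ m) (h : Even (k+l+m)) :
    (-1:ℝ)^(m+1) * k.factorial * l.factorial * (m+1).factorial *
      (((if l = 1 then (1:ℝ) else 0) + (if k = 1 then (1:ℝ) else 0))
        * Bt ((m:ℤ)+1) * Bt ((k:ℤ)+l-1))
    = -2 * (B k 0 * B l 0 * B (m+1) 0) := by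
  rw [show (m:ℤ)+1 = ((m+1:ℕ):ℤ) by push_cast; ring, Bt_nat]
  by_cases hB : B (m+1) 0 = 0
  · rw [hB]; simp
  · have hmodd : Odd m := by
      rcases Nat.even_or_odd m with he | ho
      · exact absurd (B_odd_zero (m+1) he.add_one (by omega)) hB
      · exact ho
    have hkl : Odd (k+l) := by
      rcases Nat.even_or_odd (k+l) with he | ho
      · exfalso
        have : Odd (k+l+m) := he.add_odd hmodd
        exact (Nat.not_even_iff_odd.mpr this) h
      · exact ho
    have hpow : (-1:ℝ)^(m+1) = 1 := Even.neg_one_pow hmodd.add_one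
    have hfacne : ((m+1).factorial : ℝ) ≠ 0 := Nat.cast_ne_zero.mpr (Nat.factorial_ne_zero _)
    by_cases hk1 : k = 1
    · subst hk1
      have hl1 : l ≠ 1 := by
        intro hl; subst hl
        obtain ⟨t, ht⟩ := hkl; omega
      rw [if_neg hl1, if_pos rfl,
        show ((1:ℕ):ℤ) + l - 1 = ((l:ℕ):ℤ) by push_cast; ring, Bt_nat, hpow, B_one_zero]
      have hlfacne : ((l).factorial : ℝ) ≠ 0 := Nat.cast_ne_zero.mpr (Nat.factorial_ne_zero _)
      field_simp
      ring
    · by_cases hl1 : l = 1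
      · subst hl1
        rw [if_pos rfl, if_neg hk1,
          show ((k:ℕ):ℤ) + (1:ℕ) - 1 = ((k:ℕ):ℤ) by push_cast; ring, Bt_nat, hpow, B_one_zero]
        have hkfacne : ((k).factorial : ℝ) ≠ 0 := Nat.cast_ne_zero.mpr (Nat.factorial_ne_zero _)
        field_simp
        ring
      · rw [if_neg hk1, if_neg hl1]
        have hz : B k 0 * B l 0 = 0 := by
          rcases Nat.even_or_odd k with hke | hko
          · have hlo : Odd l := by
              rcases Nat.even_or_odd l with hle | hlo
              · exfalso
                have : Even (k+l) := hke.add hle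
                exact (Nat.not_even_iff_odd.mpr hkl) this
              · exact hlo
            rw [B_odd_zero l hlo hl1, mul_zero]
          · rw [B_odd_zero k hko hk1, zero_mul]
        rw [show ((0:ℝ)+0) = 0 by ring, zero_mul, zero_mul, mul_zero, hz]
        ring

lemma F_rec (k l m : ℕ) (hm : 1 ≤ m) (h : Even (k+l+m)) :
    ((m:ℝ)+1) * F k l m
      = -2 * (B k 0 * B l 0 * B (m+1) 0)
        - (k:ℝ) * F (k-1) l (m+1) - (l:ℝ) * F k (l-1) (m+1) := by
  have h1 := kF k l m
  have h2 := lF k l m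
  have h3 := A0_eq k l m hm h
  have expand : ((m:ℝ)+1) * F k l m
      = (-1:ℝ)^(m+1) * k.factorial * l.factorial * (m+1).factorial *
          (((if l = 1 then (1:ℝ) else 0) + (if k = 1 then (1:ℝ) else 0))
            * Bt ((m:ℤ)+1) * Bt ((k:ℤ)+l-1))
        + ((-1:ℝ)^(m+1) * k.factorial * l.factorial * (m+1).factorial)
            * ∑ b ∈ Finset.range (k+l),
                (ch b ((l:ℤ)-1) + ch b ((k:ℤ)-2)) * Bt ((m:ℤ)+b+2) * Bt ((k:ℤ)+l-b-2)
        + ((-1:ℝ)^(m+1) * k.factorial * l.factorial * (m+1).factorial)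
            * ∑ b ∈ Finset.range (k+l),
                (ch b ((k:ℤ)-1) + ch b ((l:ℤ)-2)) * Bt ((m:ℤ)+b+2) * Bt ((k:ℤ)+l-b-2) := by
    rw [F, S_split, Finset.sum_add_distrib]
    have hfac : ((m:ℝ)+1) * (m.factorial : ℝ) = ((m+1).factorial : ℝ) := by
      push_cast [Nat.factorial_succ]
      ring
    linear_combination ((-1:ℝ)^(m+1) * k.factorial * l.factorial *
      (((if l = 1 then (1:ℝ) else 0) + (if k = 1 then (1:ℝ) else 0))
            * Bt ((m:ℤ)+1) * Bt ((k:ℤ)+l-1)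
        + (∑ b ∈ Finset.range (k+l),
                (ch b ((l:ℤ)-1) + ch b ((k:ℤ)-2)) * Bt ((m:ℤ)+b+2) * Bt ((k:ℤ)+l-b-2))
        + (∑ b ∈ Finset.range (k+l),
                (ch b ((k:ℤ)-1) + ch b ((l:ℤ)-2)) * Bt ((m:ℤ)+b+2) * Bt ((k:ℤ)+l-b-2)))) * hfac
  linear_combination expand + h3 + h1 + h2

lemma main_ind : ∀ n k l m : ℕ, k + l = n → 1 ≤ m → Even (k + l + m) →
    (∫ z in (0:ℝ)..1, B k z * B l z * B m z) = F k l m := by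
  intro n
  induction n using Nat.strong_induction_on with
  | _ n IH =>
    intro k l m hn hm hpar
    have hrec := J_rec k l m
    have hpw : (-1:ℝ)^(k+l+m+1) = -1 := by
      rw [pow_succ, Even.neg_one_pow hpar]
      ring
    have h1 : (k:ℝ) * (∫ z in (0:ℝ)..1, B (k-1) z * B l z * B (m+1) z)
        = (k:ℝ) * F (k-1) l (m+1) := by
      rcases Nat.eq_zero_or_pos k with rfl | hk
      · norm_num
      · congr 1
        apply IH ((k-1)+l) (by omega) (k-1) l (m+1) rfl (by omega)
        have : (k-1)+l+(m+1) = k+l+m := by omega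
        rw [this]
        exact hpar
    have h2 : (l:ℝ) * (∫ z in (0:ℝ)..1, B k z * B (l-1) z * B (m+1) z)
        = (l:ℝ) * F k (l-1) (m+1) := by
      rcases Nat.eq_zero_or_pos l with rfl | hl
      · norm_num
      · congr 1
        apply IH (k+(l-1)) (by omega) k (l-1) (m+1) rfl (by omega)
        have : k+(l-1)+(m+1) = k+l+m := by omega
        rw [this]
        exact hpar
    have hF := F_rec k l m hm hpar
    have hne : ((m:ℝ)+1) ≠ 0 := by positivity
    apply mul_left_cancel₀ hne
    rw [hrec, hpw, hF, h1, h2]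
    ring

theorem integral_prod_three_bernoulli_even (k l m : ℕ)
    (hk : 1 ≤ k) (hl : 1 ≤ l) (hm : 1 ≤ m) (h : Even (k + l + m)) :
    ∫ z in (0:ℝ)..1, B k z * B l z * B m z =
      (-1 : ℝ) ^ (m + 1) * k.factorial * l.factorial * m.factorial *
        ∑ a ∈ Finset.range (k + l + 1),
          ((a.choose (l - 1) : ℝ) + (a.choose (k - 1) : ℝ)) *
            Bt ((m : ℤ) + a + 1) * Bt ((k : ℤ) + l - a - 1) := by
  rw [main_ind (k+l) k l m rfl hm h, F]
  congr 1
  rw [S]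
  refine Finset.sum_congr rfl fun a _ => ?_
  rw [show (l:ℤ) - 1 = ((l-1 : ℕ) : ℤ) by omega, ch_nat,
    show (k:ℤ) - 1 = ((k-1 : ℕ) : ℤ) by omega, ch_nat]
end
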